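/- Let C be a category with object C, and let D, F be endofunctors of C/C and C respectively such that U ∘ D = F ∘ U where U : C/C → C is the forgetful functor. If F satisfies the hypotheses of Adámek's theorem (the limit of ⋯ → F²1 → F1 → 1 exists and is preserved by F), then D also satisfies them, and the image under U of the terminal D-coalgebra is the terminal F-coalgebra. -/

import Mathlib

open CategoryTheory Limits

universe v u

variable {C : Type u} [Category.{v} C]

/-- The `n`-fold application `Fⁿ T` of an endofunctor to an object `T`. -/
def iterTerminalObj (F : C ⥤ C) (T : C) : ℕ → C
  | 0 => T
  | n + 1 => F.obj (iterTerminalObj F T n)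

/-- The connecting maps `Fⁿ⁺¹ T ⟶ Fⁿ T`, namely `Fⁿ !` where `! : F T ⟶ T`. -/
def iterTerminalMap (F : C ⥤ C) {T : C} (hT : IsTerminal T) :
    ∀ n : ℕ, iterTerminalObj F T (n + 1) ⟶ iterTerminalObj F T n
  | 0 => hT.from _
  | n + 1 => F.map (iterTerminalMap F hT n)

/-- The inverse sequence `⋯ ⟶ F²1 ⟶ F1 ⟶ 1` as a functor `ℕᵒᵖ ⥤ C`. -/
def adamekChain (F : C ⥤ C) {T : C} (hT : IsTerminal T) : ℕᵒᵖ ⥤ C :=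
  Functor.ofOpSequence (iterTerminalMap F hT)

/-- The hypotheses of Adámek's theorem for an endofunctor `F`: there is a terminal object
`T`, the limit of the sequence `⋯ ⟶ F²1 ⟶ F1 ⟶ 1` exists, and it is preserved by `F`. -/
def AdamekHypotheses (F : C ⥤ C) : Prop :=
  ∃ T : C, Nonempty (Σ (hT : IsTerminal T) (c : Cone (adamekChain F hT)),
    IsLimit c × IsLimit (F.mapCone c))

/-! ### Auxiliary constructions for Adámek's theorem -/

section AdamekAux

variable (F : C ⥤ C) {T : C} (hT : IsTerminal T)

@[simp]
lemma adamekChain_obj (n : ℕ) : (adamekChain F hT).obj ⟨n⟩ = iterTerminalObj F T n := rfl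

@[simp]
lemma adamekChain_map_succ (n : ℕ) :
    (adamekChain F hT).map (homOfLE (Nat.le_add_right n 1)).op = iterTerminalMap F hT n :=
  Functor.ofOpSequence_map_homOfLE_succ _ n

/-- The canonical maps `B ⟶ Fⁿ T` attached to a coalgebra structure `β : B ⟶ F B`. -/
def coalgLegs {B : C} (β : B ⟶ F.obj B) : ∀ n : ℕ, B ⟶ iterTerminalObj F T n
  | 0 => hT.from B
  | n + 1 => β ≫ F.map (coalgLegs β n)

lemma coalgLegs_w {B : C} (β : B ⟶ F.obj B) (n : ℕ) :
    coalgLegs F hT β (n + 1) ≫ iterTerminalMap F hT n = coalgLegs F hT β n := by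
  induction n with
  | zero => exact hT.hom_ext _ _
  | succ n ih =>
    show (β ≫ F.map (coalgLegs F hT β (n + 1))) ≫ F.map (iterTerminalMap F hT n) = _
    rw [Category.assoc, ← F.map_comp, ih]
    rfl

/-- The cone over the Adámek chain attached to a coalgebra structure. -/
def coalgCone {B : C} (β : B ⟶ F.obj B) : Cone (adamekChain F hT) where
  pt := B
  π := NatTrans.ofOpSequence (fun n => coalgLegs F hT β n) (by
    intro n
    simp only [Functor.const_obj_obj, Functor.const_obj_map, Category.id_comp,
      adamekChain_map_succ]
    exact (Category.id_comp _).trans (coalgLegs_w F hT β n).symm)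

@[simp]
lemma coalgCone_π_app {B : C} (β : B ⟶ F.obj B) (n : ℕ) :
    (coalgCone F hT β).π.app ⟨n⟩ = coalgLegs F hT β n := rfl

/-- The "shifted" cone over `adamekChain F hT ⋙ F` with the same point as `c`. -/
def shiftCone (c : Cone (adamekChain F hT)) : Cone (adamekChain F hT ⋙ F) where
  pt := c.pt
  π := NatTrans.ofOpSequence (fun n => c.π.app ⟨n + 1⟩) (by
    intro n
    simp only [Functor.const_obj_obj, Functor.const_obj_map, Category.id_comp]
    have h := (c.w (homOfLE (Nat.le_add_right (n + 1) 1)).op).symm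
    rw [adamekChain_map_succ] at h
    have h2 : (adamekChain F hT ⋙ F).map (homOfLE (Nat.le_add_right n 1)).op =
        iterTerminalMap F hT (n + 1) := by
      rw [Functor.comp_map, adamekChain_map_succ]
      rfl
    exact (Category.id_comp _).trans (h.trans (congrArg (c.π.app ⟨n + 1 + 1⟩ ≫ ·) h2.symm)))

@[simp]
lemma shiftCone_π_app (c : Cone (adamekChain F hT)) (n : ℕ) :
    (shiftCone F hT c).π.app ⟨n⟩ = c.π.app ⟨n + 1⟩ := rfl

variable (c : Cone (adamekChain F hT)) (hFc : IsLimit (F.mapCone c))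

/-- The coalgebra structure on the limit of the Adámek chain. -/
def adamekStr : c.pt ⟶ F.obj c.pt := hFc.lift (shiftCone F hT c)

lemma adamekStr_fac (n : ℕ) :
    adamekStr F hT c hFc ≫ F.map (c.π.app ⟨n⟩) = c.π.app ⟨n + 1⟩ :=
  hFc.fac (shiftCone F hT c) ⟨n⟩

/-- Adámek's theorem: the limit of the chain is a terminal coalgebra. -/
def adamekIsTerminal (hc : IsLimit c) :
    IsTerminal (⟨c.pt, adamekStr F hT c hFc⟩ : Endofunctor.Coalgebra F) := by
  have key : ∀ (B : Endofunctor.Coalgebra F) (m : B.V ⟶ c.pt),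
      B.str ≫ F.map m = m ≫ adamekStr F hT c hFc →
      ∀ n, m ≫ c.π.app ⟨n⟩ = coalgLegs F hT B.str n := by
    intro B m hm n
    induction n with
    | zero => exact hT.hom_ext _ _
    | succ n ih =>
      rw [← adamekStr_fac F hT c hFc n]
      exact (Category.assoc _ _ _).symm.trans ((congrArg (· ≫ F.map (c.π.app ⟨n⟩)) hm.symm).trans
        ((Category.assoc _ _ _).trans
          (congrArg (B.str ≫ ·) ((F.map_comp _ _).symm.trans (congrArg F.map ih)))))
  refine IsTerminal.ofUniqueHom (fun B => ⟨hc.lift (coalgCone F hT B.str), ?_⟩) ?_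
  · apply hFc.hom_ext
    intro ⟨n⟩
    simp only [Functor.mapCone_π_app, Category.assoc]
    have e1 : hc.lift (coalgCone F hT B.str) ≫ adamekStr F hT c hFc ≫ F.map (c.π.app ⟨n⟩) =
        coalgLegs F hT B.str (n + 1) :=
      (congrArg (hc.lift (coalgCone F hT B.str) ≫ ·) (adamekStr_fac F hT c hFc n)).trans
        (hc.fac (coalgCone F hT B.str) ⟨n + 1⟩)
    exact (congrArg (B.str ≫ ·) ((F.map_comp _ _).symm.trans
      (congrArg F.map (hc.fac (coalgCone F hT B.str) ⟨n⟩)))).trans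
      (e1.symm.trans (Category.assoc _ _ _).symm)
  · intro B m
    ext
    apply hc.hom_ext
    intro ⟨n⟩
    exact (key B m.f m.h n).trans (hc.fac (coalgCone F hT B.str) ⟨n⟩).symm

end AdamekAux

/-! ### Transfer to the coslice category -/

section Transfer

variable {X : C} (D : Under X ⥤ Under X) (F : C ⥤ C)
  (hUD : D ⋙ Under.forget X = Under.forget X ⋙ F) {T : C} (hT : IsTerminal T)

/-- The terminal object of `X/C` induced by a terminal object of `C`. -/
def underTerminalIsTerminal : IsTerminal (Under.mk (hT.from X)) :=
  IsTerminal.ofUniqueHom (fun Y => Under.homMk (hT.from Y.right) (hT.hom_ext _ _))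
    (fun Y m => by
      ext
      exact hT.hom_ext _ _)

/-- The components of the comparison isomorphism between the chains. -/
def chainIsoApp : ∀ n : ℕ,
    (Under.forget X).obj (iterTerminalObj D (Under.mk (hT.from X)) n) ≅ iterTerminalObj F T n
  | 0 => Iso.refl T
  | n + 1 => eqToIso (Functor.congr_obj hUD _) ≪≫ F.mapIso (chainIsoApp n)

lemma chainIsoApp_natural (n : ℕ) :
    (Under.forget X).map (iterTerminalMap D (underTerminalIsTerminal hT) n) ≫
        (chainIsoApp D F hUD hT n).hom =
      (chainIsoApp D F hUD hT (n + 1)).hom ≫ iterTerminalMap F hT n := by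
  induction n with
  | zero => exact hT.hom_ext _ _
  | succ n ih =>
    have h := Functor.congr_hom hUD (iterTerminalMap D (underTerminalIsTerminal hT) n)
    simp only [Functor.comp_map] at h
    show (Under.forget X).map (D.map _) ≫ _ = _
    rw [h]
    show _ ≫ (eqToIso _ ≪≫ F.mapIso _).hom = (eqToIso _ ≪≫ F.mapIso _).hom ≫ F.map _
    simp only [Iso.trans_hom, eqToIso.hom, Functor.mapIso_hom, Category.assoc,
      eqToHom_trans_assoc, eqToHom_refl, Category.id_comp, ← F.map_comp]
    rw [ih]

/-- The comparison isomorphism `adamekChain D ⋙ U ≅ adamekChain F`. -/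
def chainIso :
    adamekChain D (underTerminalIsTerminal hT) ⋙ Under.forget X ≅ adamekChain F hT where
  hom := NatTrans.ofOpSequence (fun n => (chainIsoApp D F hUD hT n).hom) (by
    intro n
    simp only [Functor.comp_obj, Functor.comp_map, adamekChain_map_succ]
    exact chainIsoApp_natural D F hUD hT n)
  inv := NatTrans.ofOpSequence (fun n => (chainIsoApp D F hUD hT n).inv) (by
    intro n
    simp only [Functor.comp_obj, Functor.comp_map, adamekChain_map_succ]
    exact (Iso.comp_inv_eq _).mpr (((Iso.eq_inv_comp _).mpr
      (chainIsoApp_natural D F hUD hT n).symm).trans (Category.assoc _ _ _).symm))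
  hom_inv_id := by
    ext ⟨n⟩
    exact (chainIsoApp D F hUD hT n).hom_inv_id
  inv_hom_id := by
    ext ⟨n⟩
    exact (chainIsoApp D F hUD hT n).inv_hom_id

@[simp]
lemma chainIso_hom_app (n : ℕ) :
    (chainIso D F hUD hT).hom.app ⟨n⟩ = (chainIsoApp D F hUD hT n).hom := rfl

end Transfer

/-- Let `C` be a category with an object `X`, and let `D`, `F` be endofunctors of the
coslice `X/C` and of `C` respectively, with `U ∘ D = F ∘ U` for the forgetful functor
`U : X/C ⥤ C`.  If `F` satisfies the hypotheses of Adámek's theorem, then so does `D`, and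
the image under `U` of any terminal `D`-coalgebra is a terminal `F`-coalgebra. -/
theorem coslice_adamek_transfer (X : C) (D : Under X ⥤ Under X) (F : C ⥤ C)
    (hUD : D ⋙ Under.forget X = Under.forget X ⋙ F)
    (hF : AdamekHypotheses F) :
    AdamekHypotheses D ∧
    ∀ A : Endofunctor.Coalgebra D, IsTerminal A →
      Nonempty (IsTerminal
        (⟨(Under.forget X).obj A.V,
          (Under.forget X).map A.str ≫ eqToHom (Functor.congr_obj hUD A.V)⟩ :
          Endofunctor.Coalgebra F)) := by
  obtain ⟨T, ⟨⟨hT, c, hc, hFc⟩⟩⟩ := hF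
  let e := chainIso D F hUD hT
  haveI : HasLimit (adamekChain F hT) := HasLimit.mk ⟨c, hc⟩
  haveI : HasLimit (adamekChain D (underTerminalIsTerminal hT) ⋙ Under.forget X) := hasLimit_of_iso e.symm
  let c' : Cone (adamekChain D (underTerminalIsTerminal hT)) := limit.cone _
  have hc' : IsLimit c' := limit.isLimit _
  have hUc' : IsLimit ((Under.forget X).mapCone c') := isLimitOfPreserves _ hc'
  have ht₁ : IsLimit ((Cones.postcompose e.hom).obj ((Under.forget X).mapCone c')) :=
    (IsLimit.postcomposeHomEquiv e _).symm hUc'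
  have hFt₁ : IsLimit
      (F.mapCone ((Cones.postcompose e.hom).obj ((Under.forget X).mapCone c'))) :=
    hFc.ofIsoLimit ((Cones.functoriality _ F).mapIso (ht₁.uniqueUpToIso hc)).symm
  have hFt₂ : IsLimit ((Cones.postcompose (Functor.whiskerRight e.hom F)).obj
      (F.mapCone ((Under.forget X).mapCone c'))) :=
    hFt₁.ofIsoLimit (Functor.mapConePostcompose F)
  have hK : IsLimit (F.mapCone ((Under.forget X).mapCone c')) :=
    (IsLimit.postcomposeHomEquiv (Functor.isoWhiskerRight e F) _) hFt₂
  have hDc' : IsLimit (D.mapCone c') := by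
    apply isLimitOfReflects (Under.forget X)
    exact (IsLimit.mapConeEquiv (eqToIso hUD).symm) hK
  refine ⟨⟨Under.mk (hT.from X), ⟨⟨(underTerminalIsTerminal hT), c', hc', hDc'⟩⟩⟩, ?_⟩
  intro A hA
  have hA' := adamekIsTerminal D (underTerminalIsTerminal hT) c' hDc' hc'
  let G : Endofunctor.Coalgebra D ⥤ Endofunctor.Coalgebra F :=
  { obj := fun A => ⟨(Under.forget X).obj A.V,
      (Under.forget X).map A.str ≫ eqToHom (Functor.congr_obj hUD A.V)⟩
    map := fun {A B} f => ⟨(Under.forget X).map f.f, by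
      have h := Functor.congr_hom hUD f.f
      simp only [Functor.comp_map] at h
      have h3 : eqToHom (Functor.congr_obj hUD A.V) ≫ F.map ((Under.forget X).map f.f)
          = (Under.forget X).map (D.map f.f) ≫ eqToHom (Functor.congr_obj hUD B.V) := by
        rw [h]; simp only [Category.assoc, eqToHom_trans, eqToHom_refl, Category.comp_id]
      rw [Category.assoc, h3, ← Category.assoc, ← Functor.map_comp, f.h,
        Functor.map_comp, Category.assoc]⟩
    map_id := fun A => by ext; simp
    map_comp := fun f g => by ext; simp }
  have hL := adamekIsTerminal F hT c hFc hc
  let u : (Under.forget X).obj c'.pt ≅ c.pt :=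
    IsLimit.conePointsIsoOfNatIso hUc' hc e
  have hl : ∀ n : ℕ, u.hom ≫ c.π.app ⟨n⟩ =
      (Under.forget X).map (c'.π.app ⟨n⟩) ≫ (chainIsoApp D F hUD hT n).hom := by
    intro n
    simp only [u, e, IsLimit.conePointsIsoOfNatIso_hom_comp, Functor.mapCone_π_app,
      chainIso_hom_app]
    rfl
  have hw : ((Under.forget X).map (adamekStr D (underTerminalIsTerminal hT) c' hDc') ≫
        eqToHom (Functor.congr_obj hUD c'.pt)) ≫ F.map u.hom =
      u.hom ≫ adamekStr F hT c hFc := by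
    apply hFc.hom_ext
    rintro ⟨n⟩
    have h := Functor.congr_hom hUD (c'.π.app ⟨n⟩)
    simp only [Functor.comp_map] at h
    have h3 : eqToHom (Functor.congr_obj hUD c'.pt) ≫ F.map ((Under.forget X).map (c'.π.app ⟨n⟩))
        = (Under.forget X).map (D.map (c'.π.app ⟨n⟩)) ≫
            eqToHom (Functor.congr_obj hUD (iterTerminalObj D (Under.mk (hT.from X)) n)) := by
      rw [h]; simp
      erw [eqToHom_trans, eqToHom_refl, Category.comp_id]
    have fac := adamekStr_fac D (underTerminalIsTerminal hT) c' hDc' n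
    have s1 : (((Under.forget X).map (adamekStr D (underTerminalIsTerminal hT) c' hDc') ≫
            eqToHom (Functor.congr_obj hUD c'.pt)) ≫ F.map u.hom) ≫ (F.mapCone c).π.app ⟨n⟩
        = (Under.forget X).map (adamekStr D (underTerminalIsTerminal hT) c' hDc') ≫
            eqToHom (Functor.congr_obj hUD c'.pt) ≫ F.map (u.hom ≫ c.π.app ⟨n⟩) :=
      (Category.assoc _ _ _).trans ((Category.assoc _ _ _).trans
        (congrArg (fun t => _ ≫ _ ≫ t) (F.map_comp _ _).symm))
    have s2 : (Under.forget X).map (adamekStr D (underTerminalIsTerminal hT) c' hDc') ≫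
            eqToHom (Functor.congr_obj hUD c'.pt) ≫ F.map (u.hom ≫ c.π.app ⟨n⟩)
        = (Under.forget X).map (adamekStr D (underTerminalIsTerminal hT) c' hDc') ≫
            eqToHom (Functor.congr_obj hUD c'.pt) ≫
            F.map ((Under.forget X).map (c'.π.app ⟨n⟩)) ≫ F.map (chainIsoApp D F hUD hT n).hom := by
          rw [hl n]
          exact congrArg (fun t => _ ≫ _ ≫ t) (F.map_comp _ _)
    have s3 : (Under.forget X).map (adamekStr D (underTerminalIsTerminal hT) c' hDc') ≫
            eqToHom (Functor.congr_obj hUD c'.pt) ≫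
            F.map ((Under.forget X).map (c'.π.app ⟨n⟩)) ≫ F.map (chainIsoApp D F hUD hT n).hom
        = (Under.forget X).map (adamekStr D (underTerminalIsTerminal hT) c' hDc' ≫ D.map (c'.π.app ⟨n⟩)) ≫
            eqToHom (Functor.congr_obj hUD (iterTerminalObj D (Under.mk (hT.from X)) n)) ≫
            F.map (chainIsoApp D F hUD hT n).hom := by
          rw [← Category.assoc (eqToHom _), h3]
          simp [Category.assoc]
    have s4 : (Under.forget X).map (adamekStr D (underTerminalIsTerminal hT) c' hDc' ≫ D.map (c'.π.app ⟨n⟩)) ≫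
            eqToHom (Functor.congr_obj hUD (iterTerminalObj D (Under.mk (hT.from X)) n)) ≫
            F.map (chainIsoApp D F hUD hT n).hom
        = (Under.forget X).map (c'.π.app ⟨n + 1⟩) ≫ (chainIsoApp D F hUD hT (n + 1)).hom := by
          rw [fac]
          simp [chainIsoApp]
          rfl
    have s6 : u.hom ≫ c.π.app ⟨n + 1⟩ = (u.hom ≫ adamekStr F hT c hFc) ≫ (F.mapCone c).π.app ⟨n⟩ := by
          have h5 := adamekStr_fac F hT c hFc n
          simp only [Functor.mapCone_π_app, Category.assoc]
          rw [h5]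
          rfl
    exact s1.trans (s2.trans (s3.trans (s4.trans ((hl (n + 1)).symm.trans s6))))
  let iso := Endofunctor.Coalgebra.isoMk (F := F)
    (V₀ := G.obj ⟨c'.pt, adamekStr D (underTerminalIsTerminal hT) c' hDc'⟩)
    (V₁ := ⟨c.pt, adamekStr F hT c hFc⟩) u hw
  exact ⟨((hL.ofIso iso.symm).ofIso (G.mapIso (hA.uniqueUpToIso hA')).symm)⟩
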